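/- arXiv:1410.8257 — 5 statements merged into one kernel-verified Lean document; each statement's English description precedes it below -/
import Mathlib

section
/- Let R > 0 and M ≥ 0. Let h be continuous on {z ∈ ℂ : |z| ≥ R}, holomorphic on {z ∈ ℂ : |z| > R}, with h(z) → 0 as |z| → ∞, and suppose |h(z)| ≤ M for all z with |z| = R. Then for every z ∈ ℂ with |z| ≥ 2R² and |z| > R one has |z|·|h(z)| ≤ 2RM. (Quantitative decay estimate (5.7), the core of Proposition 5.1(ii).) -/
open Filter Bornology Topology

/-- Quantitative decay estimate (5.7), the core of Proposition 5.1(ii):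
a function holomorphic outside a disk of radius `R`, vanishing at infinity and
bounded by `M` on the circle of radius `R`, satisfies `|z·h(z)| ≤ 2RM` for
`|z| ≥ 2R²`. -/
theorem decay_estimate_at_infinity
    (R M : ℝ) (hR : 0 < R) (hM : 0 ≤ M) (h : ℂ → ℂ)
    (hcont : ContinuousOn h {z : ℂ | R ≤ ‖z‖})
    (hdiff : DifferentiableOn ℂ h {z : ℂ | R < ‖z‖})
    (hlim : Tendsto h (cobounded ℂ) (𝓝 0))
    (hbound : ∀ z : ℂ, ‖z‖ = R → ‖h z‖ ≤ M) :
    ∀ z : ℂ, 2 * R ^ 2 ≤ ‖z‖ → R < ‖z‖ →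
      ‖z‖ * ‖h z‖ ≤ 2 * R * M := by
  -- Transfer to the disk of radius `R⁻¹` via `w ↦ h w⁻¹`, extended by `0` at `0`.
  set F : ℂ → ℂ := fun w => if w = 0 then 0 else h w⁻¹ with hF
  have hRinv : (0:ℝ) < R⁻¹ := by positivity
  have hmem : ∀ w : ℂ, w ≠ 0 → w ∈ Metric.closedBall (0:ℂ) R⁻¹ →
      R ≤ ‖w⁻¹‖ := by
    intro w hw0 hw
    rw [Metric.mem_closedBall, dist_zero_right] at hw
    rw [norm_inv, le_inv_comm₀ hR (by simpa [norm_pos_iff] using hw0)]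
    exact hw
  -- continuity at 0
  have hF0 : ContinuousAt F 0 := by
    have h1 : Tendsto F (𝓝[≠] (0:ℂ)) (𝓝 0) := by
      have : Tendsto (fun w : ℂ => h w⁻¹) (𝓝[≠] (0:ℂ)) (𝓝 0) :=
        hlim.comp tendsto_inv₀_nhdsNE_zero
      refine this.congr' ?_
      filter_upwards [self_mem_nhdsWithin] with w hw
      simp only [hF]
      rw [if_neg (by simpa using hw)]
    have h2 : Tendsto F (pure (0:ℂ)) (𝓝 0) := by
      simpa [hF] using tendsto_pure_nhds F 0
    have h3 := h1.sup h2
    rw [nhdsNE_sup_pure] at h3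
    have hF00 : F 0 = 0 := by simp [hF]
    rw [ContinuousAt, hF00]
    exact h3
  -- continuity on the closed ball
  have hFc : ContinuousOn F (Metric.closedBall (0:ℂ) R⁻¹) := by
    intro w hw
    rcases eq_or_ne w 0 with rfl | hw0
    · exact hF0.continuousWithinAt
    · have hc : ContinuousWithinAt (fun u : ℂ => h u⁻¹)
          (Metric.closedBall (0:ℂ) R⁻¹ \ {0}) w := by
        refine ContinuousWithinAt.comp (hcont _ ?_)
          ((continuousAt_inv₀ hw0).continuousWithinAt) ?_
        · exact hmem w hw0 hw
        · intro u hu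
          exact hmem u (by simpa using hu.2) hu.1
      have hc' : ContinuousWithinAt F (Metric.closedBall (0:ℂ) R⁻¹ \ {0}) w := by
        refine hc.congr (fun u hu => ?_) ?_
        · simp only [hF]; rw [if_neg (by simpa using hu.2)]
        · simp only [hF]; rw [if_neg hw0]
      refine hc'.mono_of_mem_nhdsWithin ?_
      rw [Set.diff_eq]
      exact Filter.inter_mem self_mem_nhdsWithin
        (mem_nhdsWithin_of_mem_nhds (isOpen_compl_singleton.mem_nhds hw0))
  -- differentiability on the open ball
  have hFd : DifferentiableOn ℂ F (Metric.ball (0:ℂ) R⁻¹) := by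
    refine (Complex.differentiableOn_compl_singleton_and_continuousAt_iff
      (Metric.ball_mem_nhds _ hRinv)).1 ⟨?_, hF0⟩
    intro w hw
    have hw0 : w ≠ 0 := by simpa using hw.2
    have hwb := hw.1
    rw [Metric.mem_ball, dist_zero_right] at hwb
    have hwR : R < ‖w⁻¹‖ := by
      rw [norm_inv, lt_inv_comm₀ hR (by simpa [norm_pos_iff] using hw0)]
      exact hwb
    have hd : DifferentiableWithinAt ℂ (fun u : ℂ => h u⁻¹)
        (Metric.ball (0:ℂ) R⁻¹ \ {0}) w := by
      refine DifferentiableWithinAt.comp (t := {z : ℂ | R < ‖z‖}) w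
        (hdiff _ hwR)
        ((differentiableAt_inv hw0).differentiableWithinAt) ?_
      intro u hu
      have hu0 : u ≠ 0 := by simpa using hu.2
      have hub := hu.1
      rw [Metric.mem_ball, dist_zero_right] at hub
      show R < ‖u⁻¹‖
      rw [norm_inv, lt_inv_comm₀ hR (by simpa [norm_pos_iff] using hu0)]
      exact hub
    refine hd.congr (fun u hu => ?_) ?_
    · simp only [hF]; rw [if_neg (by simpa using hu.2)]
    · simp only [hF]; rw [if_neg hw0]
  -- max modulus: ‖F‖ ≤ M on the closed ball
  have hFb : ∀ w ∈ Metric.closedBall (0:ℂ) R⁻¹, ‖F w‖ ≤ M := by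
    intro w hw
    refine Complex.norm_le_of_forall_mem_frontier_norm_le
      (Metric.isBounded_ball (x := (0:ℂ)) (r := R⁻¹)) ⟨hFd, ?_⟩ ?_ ?_
    · rw [closure_ball _ (ne_of_gt hRinv)]
      exact hFc
    · intro u hu
      rw [frontier_ball _ (ne_of_gt hRinv), mem_sphere_iff_norm, sub_zero] at hu
      have hu0 : u ≠ 0 := by
        intro h0; rw [h0, norm_zero] at hu; exact (ne_of_gt hRinv) hu.symm
      have habs : ‖u⁻¹‖ = R := by
        rw [norm_inv, hu, inv_inv]
      simp only [hF]
      rw [if_neg hu0]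
      exact hbound _ habs
    · rwa [closure_ball _ (ne_of_gt hRinv)]
  -- Schwarz lemma: ‖F w‖ ≤ M R |w| on the open ball
  have key : ∀ w ∈ Metric.ball (0:ℂ) R⁻¹, ‖F w‖ ≤ M * R * ‖w‖ := by
    intro w hw
    have step : ∀ ε : ℝ, 0 < ε → ‖F w‖ ≤ (M + ε) * R * ‖w‖ := by
      intro ε hε
      have hF00 : F 0 = 0 := by simp [hF]
      have hmaps : Set.MapsTo F (Metric.ball (0:ℂ) R⁻¹)
          (Metric.ball (F 0) (M + ε)) := by
        intro u hu
        rw [Metric.mem_ball, hF00, dist_zero_right]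
        exact lt_of_le_of_lt (hFb u (Metric.ball_subset_closedBall hu)) (by linarith)
      have hs := Complex.dist_le_div_mul_dist_of_mapsTo_ball hFd (hmaps.mono_right Metric.ball_subset_closedBall) hw
      rw [hF00, dist_zero_right, dist_zero_right] at hs
      have heq : (M + ε) / R⁻¹ = (M + ε) * R := by field_simp
      rw [heq] at hs
      exact hs
    rcases eq_or_ne w 0 with rfl | hw0
    · have : F 0 = 0 := by simp [hF]
      rw [this, norm_zero]
      positivity
    · have hwpos : 0 < ‖w‖ := norm_pos_iff.mpr hw0
      refine le_of_forall_pos_le_add fun δ hδ => ?_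
      have hε : 0 < δ / (R * ‖w‖) := by positivity
      calc ‖F w‖ ≤ (M + δ / (R * ‖w‖)) * R * ‖w‖ := step _ hε
        _ = M * R * ‖w‖ + δ := by field_simp
  -- conclude
  intro z _hz2 hzR
  have hz0 : z ≠ 0 := by
    intro h0
    rw [h0, norm_zero] at hzR
    exact absurd hzR (not_lt.2 hR.le)
  have habs : 0 < ‖z‖ := norm_pos_iff.mpr hz0
  have hw : z⁻¹ ∈ Metric.ball (0:ℂ) R⁻¹ := by
    rw [Metric.mem_ball, dist_zero_right, norm_inv]
    exact inv_strictAnti₀ hR hzR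
  have hk := key z⁻¹ hw
  simp only [hF] at hk
  rw [if_neg (inv_ne_zero hz0), inv_inv, norm_inv] at hk
  calc ‖z‖ * ‖h z‖
      ≤ ‖z‖ * (M * R * (‖z‖)⁻¹) :=
        mul_le_mul_of_nonneg_left hk habs.le
    _ = M * R := by field_simp
    _ ≤ 2 * R * M := by nlinarith
end

section
/- Let a < b be real numbers, let h : ℝ × ℂ → ℂ be continuous on [a, b] × ℂ, and suppose there is L ≥ 0 with |h(t, z) − h(t, w)| ≤ L·|z − w| for all t ∈ [a, b] and z, w ∈ ℂ. Assume moreover that h(t, x) is real for every t ∈ [a, b] and every real x. If z : [a, b] → ℂ satisfies z'(t) = h(t, z(t)) for all t ∈ [a, b] and z(t₀) ∈ ℝ for some t₀ ∈ [a, b], then z(t) ∈ ℝ for every t ∈ [a, b]. (Real invariance of solutions of the driving ODE, the key step in the proofs of Lemma 5.2 and Lemma 5.3.) -/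
open Filter Topology

/-- Forward Grönwall: a real function with `|f'| ≤ K|f|` vanishing at the left
endpoint vanishes on the whole interval. -/
lemma gronwall_zero_forward {f f' : ℝ → ℝ} {K c d : ℝ}
    (hcd : c ≤ d)
    (hd : ∀ x ∈ Set.Icc c d, HasDerivWithinAt f (f' x) (Set.Icc c d) x)
    (hb : ∀ x ∈ Set.Icc c d, |f' x| ≤ K * |f x|) (h0 : f c = 0) :
    ∀ x ∈ Set.Icc c d, f x = 0 := by
  have hcont : ContinuousOn f (Set.Icc c d) := fun x hx => (hd x hx).continuousWithinAt
  have key := norm_le_gronwallBound_of_norm_deriv_right_le (δ := 0) (K := K) (ε := 0)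
    (a := c) (b := d) hcont
    (fun x hx => (hd x (Set.Ico_subset_Icc_self hx)).mono_of_mem_nhdsWithin
      (Icc_mem_nhdsGE_of_mem hx))
    (by simp [h0])
    (fun x hx => by simpa using hb x (Set.Ico_subset_Icc_self hx))
  intro x hx
  have h1 := key x hx
  rw [gronwallBound_ε0_δ0] at h1
  exact abs_nonpos_iff.mp h1

/-- Two-sided Grönwall: vanishing at an interior point. -/
lemma gronwall_zero {f f' : ℝ → ℝ} {K c d t₀ : ℝ}
    (hd : ∀ x ∈ Set.Icc c d, HasDerivWithinAt f (f' x) (Set.Icc c d) x)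
    (hb : ∀ x ∈ Set.Icc c d, |f' x| ≤ K * |f x|)
    (ht₀ : t₀ ∈ Set.Icc c d) (h0 : f t₀ = 0) :
    ∀ x ∈ Set.Icc c d, f x = 0 := by
  obtain ⟨hc, hdle⟩ := ht₀
  -- forward part on [t₀, d]
  have hfwd : ∀ x ∈ Set.Icc t₀ d, f x = 0 := by
    refine gronwall_zero_forward (f' := f') (K := K) hdle ?_ ?_ h0
    · intro x hx
      exact (hd x ⟨le_trans hc hx.1, hx.2⟩).mono (Set.Icc_subset_Icc hc le_rfl)
    · intro x hx
      exact hb x ⟨le_trans hc hx.1, hx.2⟩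
  -- backward part via reflection
  have hbwd : ∀ x ∈ Set.Icc c t₀, f x = 0 := by
    set g : ℝ → ℝ := fun s => f (2 * t₀ - s) with hg
    set g' : ℝ → ℝ := fun s => -f' (2 * t₀ - s) with hg'
    have hmaps : ∀ s ∈ Set.Icc t₀ (2 * t₀ - c), 2 * t₀ - s ∈ Set.Icc c d := by
      intro s hs
      constructor <;> [linarith [hs.2]; linarith [hs.1]]
    have hgd : ∀ s ∈ Set.Icc t₀ (2 * t₀ - c),
        HasDerivWithinAt g (g' s) (Set.Icc t₀ (2 * t₀ - c)) s := by
      intro s hs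
      have hin : HasDerivWithinAt (fun s : ℝ => 2 * t₀ - s) (-1)
          (Set.Icc t₀ (2 * t₀ - c)) s :=
        ((hasDerivAt_id s).const_sub (2 * t₀)).hasDerivWithinAt
      have := (hd _ (hmaps s hs)).comp s hin (fun x hx => hmaps x hx)
      exact this.congr_deriv (by simp [hg'])
    have h0' : g t₀ = 0 := by simp [hg, show 2 * t₀ - t₀ = t₀ by ring, h0]
    have := gronwall_zero_forward (f' := g') (K := K) (by linarith) hgd
      (fun s hs => by simpa [hg, hg'] using hb _ (hmaps s hs)) h0'
    intro x hx
    have hx' : 2 * t₀ - x ∈ Set.Icc t₀ (2 * t₀ - c) := by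
      constructor <;> [linarith [hx.2]; linarith [hx.1]]
    have := this _ hx'
    simpa [hg, show 2 * t₀ - (2 * t₀ - x) = x by ring] using this
  intro x hx
  rcases le_total x t₀ with hle | hle
  · exact hbwd x ⟨hx.1, hle⟩
  · exact hfwd x ⟨hle, hx.2⟩

/-- Real invariance of solutions of the driving ODE (the key step in the proofs of
Lemmas 5.2 and 5.3): if the field `h` is Lipschitz, jointly continuous and maps
real points to real values, then a solution that is real at one time is real at
all times. -/
theorem real_invariance_of_ODE_solution
    (a b : ℝ) (hab : a < b) (h : ℝ → ℂ → ℂ) (L : ℝ) (hL : 0 ≤ L)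
    (hcont : ContinuousOn (fun p : ℝ × ℂ => h p.1 p.2) (Set.Icc a b ×ˢ Set.univ))
    (hlip : ∀ t ∈ Set.Icc a b, ∀ z w : ℂ,
      ‖h t z - h t w‖ ≤ L * ‖z - w‖)
    (hreal : ∀ t ∈ Set.Icc a b, ∀ x : ℝ, (h t (x : ℂ)).im = 0)
    (z : ℝ → ℂ)
    (hz : ∀ t ∈ Set.Icc a b, HasDerivWithinAt z (h t (z t)) (Set.Icc a b) t)
    (t₀ : ℝ) (ht₀ : t₀ ∈ Set.Icc a b) (hz₀ : (z t₀).im = 0) :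
    ∀ t ∈ Set.Icc a b, (z t).im = 0 := by
  have hder : ∀ t ∈ Set.Icc a b,
      HasDerivWithinAt (fun t => (z t).im) ((h t (z t)).im) (Set.Icc a b) t := by
    intro t ht
    simpa [Function.comp_def] using (Complex.imCLM.hasFDerivAt.comp_hasDerivWithinAt t (hz t ht))
  have hbound : ∀ t ∈ Set.Icc a b, |(h t (z t)).im| ≤ L * |(z t).im| := by
    intro t ht
    have h1 : (h t ((z t).re : ℂ)).im = 0 := hreal t ht (z t).re
    have h2 : |(h t (z t)).im| = |(h t (z t) - h t ((z t).re : ℂ)).im| := by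
      rw [Complex.sub_im, h1, sub_zero]
    calc |(h t (z t)).im| = |(h t (z t) - h t ((z t).re : ℂ)).im| := h2
      _ ≤ ‖h t (z t) - h t ((z t).re : ℂ)‖ := Complex.abs_im_le_norm _
      _ ≤ L * ‖z t - ((z t).re : ℂ)‖ := hlip t ht _ _
      _ = L * |(z t).im| := by
          congr 1
          have : z t - ((z t).re : ℂ) = Complex.I * (z t).im := by
            apply Complex.ext <;> simp
          rw [this]
          simp
  exact gronwall_zero hder hbound ht₀ hz₀
end

section
/- Let t > 0, M₁ > 0, let ξ : [0, t] → ℂ be continuous, and set R := max( sup_{0 ≤ s ≤ t} |ξ(s) − ξ(0)| , √(M₁ t / 2) ) (so R > 0). Let z ∈ ℂ with |z − ξ(0)| ≥ 4R, and let g : [0, t] → ℂ be differentiable with g(0) = z, satisfying: for every s ∈ [0, t], if |g(s) − ξ(s)| ≥ 2R then |g'(s)| ≤ M₁/(2R). Then for every s ∈ [0, t] one has |g(s) − z| ≤ R and |g(s) − ξ(s)| ≥ 2R. (The quantitative hull-growth estimate proving Lemma 5.7, which yields F_t ⊂ B(ξ(0), 4R_t).) -/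
open Filter Topology

/-- The quantitative hull-growth estimate proving Lemma 5.7, which yields
`F_t ⊂ B(ξ(0), 4 R_t)`. -/
theorem hull_growth_estimate
    (t : ℝ) (ht : 0 < t) (M₁ : ℝ) (hM₁ : 0 < M₁)
    (ξ : ℝ → ℂ) (hξ : ContinuousOn ξ (Set.Icc 0 t))
    (R : ℝ)
    (hR : R = max (sSup ((fun s => ‖ξ s - ξ 0‖) '' Set.Icc 0 t))
      (Real.sqrt (M₁ * t / 2)))
    (hRpos : 0 < R)
    (z : ℂ) (hz : 4 * R ≤ ‖z - ξ 0‖)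
    (g g' : ℝ → ℂ) (hg0 : g 0 = z)
    (hderiv : ∀ s ∈ Set.Icc 0 t, HasDerivWithinAt g (g' s) (Set.Icc 0 t) s)
    (hbound : ∀ s ∈ Set.Icc 0 t, 2 * R ≤ ‖g s - ξ s‖ →
      ‖g' s‖ ≤ M₁ / (2 * R)) :
    ∀ s ∈ Set.Icc 0 t,
      ‖g s - z‖ ≤ R ∧ 2 * R ≤ ‖g s - ξ s‖ := by
  -- basic facts about R
  have hξR : ∀ s ∈ Set.Icc (0:ℝ) t, ‖ξ s - ξ 0‖ ≤ R := by
    intro s hs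
    have hcont : ContinuousOn (fun s => ‖ξ s - ξ 0‖) (Set.Icc 0 t) := by
      simpa using (hξ.sub continuousOn_const).norm
    have hbdd : BddAbove ((fun s => ‖ξ s - ξ 0‖) '' Set.Icc 0 t) :=
      (isCompact_Icc.image_of_continuousOn hcont).bddAbove
    have h1 : ‖ξ s - ξ 0‖
        ≤ sSup ((fun s => ‖ξ s - ξ 0‖) '' Set.Icc 0 t) :=
      le_csSup hbdd ⟨s, hs, rfl⟩
    exact h1.trans (hR ▸ le_max_left _ _)
  have hsqrt : Real.sqrt (M₁ * t / 2) ≤ R := hR ▸ le_max_right _ _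
  have hR2 : M₁ * t / 2 ≤ R ^ 2 := by
    have h0 : (0:ℝ) ≤ M₁ * t / 2 := by positivity
    calc M₁ * t / 2 = Real.sqrt (M₁ * t / 2) ^ 2 := (Real.sq_sqrt h0).symm
      _ ≤ R ^ 2 := by
          have := Real.sqrt_nonneg (M₁ * t / 2)
          nlinarith
  have hMtR : M₁ / (2 * R) * t ≤ R := by
    rw [div_mul_eq_mul_div, div_le_iff₀ (by positivity)]
    nlinarith
  -- if |g s - z| ≤ R then the distance to ξ s is at least 2R
  have hkey : ∀ s ∈ Set.Icc (0:ℝ) t, ‖g s - z‖ ≤ R →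
      2 * R ≤ ‖g s - ξ s‖ := by
    intro s hs hgs
    have htri : ‖z - ξ 0‖
        ≤ ‖g s - z‖ + ‖g s - ξ s‖
          + ‖ξ s - ξ 0‖ := by
      have hid : z - ξ 0 = -(g s - z) + (g s - ξ s) + (ξ s - ξ 0) := by ring
      calc ‖z - ξ 0‖
          = ‖-(g s - z) + (g s - ξ s) + (ξ s - ξ 0)‖ := by rw [← hid]
        _ ≤ ‖-(g s - z) + (g s - ξ s)‖ + ‖ξ s - ξ 0‖ :=
            norm_add_le _ _
        _ ≤ ‖-(g s - z)‖ + ‖g s - ξ s‖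
              + ‖ξ s - ξ 0‖ := by
            gcongr; exact norm_add_le _ _
        _ = ‖g s - z‖ + ‖g s - ξ s‖
              + ‖ξ s - ξ 0‖ := by rw [norm_neg]
    have := hξR s hs
    linarith
  -- the bootstrap set
  set A : Set ℝ := {s | s ∈ Set.Icc 0 t ∧
      ∀ u ∈ Set.Icc 0 s, ‖g u - z‖ ≤ R} with hA
  have h0A : (0:ℝ) ∈ A := by
    refine ⟨⟨le_refl 0, le_of_lt ht⟩, ?_⟩
    intro u hu
    have : u = 0 := le_antisymm hu.2 hu.1
    simp [this, hg0, hRpos.le]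
  have hbddA : BddAbove A := ⟨t, fun s hs => hs.1.2⟩
  -- core estimate on A
  have hcore : ∀ s ∈ A, ‖g s - z‖ ≤ M₁ / (2 * R) * s := by
    intro s hsA
    obtain ⟨⟨hs0, hst⟩, hsub⟩ := hsA
    have hIcc : Set.Icc (0:ℝ) s ⊆ Set.Icc 0 t :=
      Set.Icc_subset_Icc le_rfl hst
    have hf : ∀ x ∈ Set.Icc (0:ℝ) s, HasDerivWithinAt g (g' x) (Set.Icc 0 s) x :=
      fun x hx => (hderiv x (hIcc hx)).mono hIcc
    have hb : ∀ x ∈ Set.Ico (0:ℝ) s, ‖g' x‖ ≤ M₁ / (2 * R) := by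
      intro x hx
      have hx' : x ∈ Set.Icc (0:ℝ) s := ⟨hx.1, hx.2.le⟩
      have hxt : x ∈ Set.Icc (0:ℝ) t := hIcc hx'
      have h1 : ‖g x - z‖ ≤ R := hsub x hx'
      have h2 := hkey x hxt h1
      simpa using hbound x hxt h2
    have := norm_image_sub_le_of_norm_deriv_le_segment' hf hb s ⟨hs0, le_rfl⟩
    rw [hg0] at this
    simpa using this
  set T := sSup A with hT
  have hT0 : 0 ≤ T := le_csSup hbddA h0A
  have hTt : T ≤ t := csSup_le ⟨0, h0A⟩ fun s hs => hs.1.2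
  have hTIcc : T ∈ Set.Icc (0:ℝ) t := ⟨hT0, hTt⟩
  -- below T the bound holds
  have hbelow : ∀ u, 0 ≤ u → u < T → ‖g u - z‖ ≤ R := by
    intro u hu0 huT
    obtain ⟨s, hsA, hus⟩ := exists_lt_of_lt_csSup ⟨0, h0A⟩ huT
    exact hsA.2 u ⟨hu0, hus.le⟩
  -- T ∈ A
  have hTA : T ∈ A := by
    refine ⟨hTIcc, ?_⟩
    intro u hu
    rcases lt_or_eq_of_le hu.2 with h | h
    · exact hbelow u hu.1 h
    · subst h
      rcases eq_or_lt_of_le hT0 with h0 | h0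
      · simp [← h0, hg0, hRpos.le]
      · -- continuity argument at T
        have hgc : ContinuousWithinAt (fun u => ‖g u - z‖)
            (Set.Icc 0 t) T := by
          have h1 : ContinuousWithinAt (fun u => g u - z) (Set.Icc 0 t) T :=
            (hderiv T hTIcc).continuousWithinAt.sub continuousWithinAt_const
          simpa using h1.norm
        have hne : (𝓝[Set.Ico 0 T] T).NeBot := right_nhdsWithin_Ico_neBot h0
        have hmono : 𝓝[Set.Ico 0 T] T ≤ 𝓝[Set.Icc 0 t] T :=
          nhdsWithin_mono _ (fun x hx => ⟨hx.1, hx.2.le.trans hTt⟩)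
        have htend : Tendsto (fun u => ‖g u - z‖) (𝓝[Set.Ico 0 T] T)
            (𝓝 (‖g T - z‖)) := hgc.tendsto.mono_left hmono
        refine le_of_tendsto htend ?_
        filter_upwards [self_mem_nhdsWithin] with x hx
        exact hbelow x hx.1 hx.2
  -- T = t
  have hTeq : T = t := by
    by_contra hne
    have hTlt : T < t := lt_of_le_of_ne hTt hne
    have hstrict : ‖g T - z‖ < R := by
      have h1 := hcore T hTA
      have h2 : M₁ / (2 * R) * T < M₁ / (2 * R) * t :=
        mul_lt_mul_of_pos_left hTlt (by positivity)
      linarith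
    -- extend beyond T using continuity
    have hgc : ContinuousWithinAt (fun u => ‖g u - z‖)
        (Set.Icc 0 t) T := by
      have h1 : ContinuousWithinAt (fun u => g u - z) (Set.Icc 0 t) T :=
        (hderiv T hTIcc).continuousWithinAt.sub continuousWithinAt_const
      simpa using h1.norm
    have hev : ∀ᶠ u in 𝓝[Set.Icc 0 t] T, ‖g u - z‖ ≤ R := by
      have : ∀ᶠ u in 𝓝[Set.Icc 0 t] T,
          ‖g u - z‖ ∈ Set.Iio R :=
        hgc.tendsto (Iio_mem_nhds hstrict)
      filter_upwards [this] with x hx using hx.le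
    obtain ⟨ε, hε, hball⟩ := Metric.mem_nhdsWithin_iff.mp hev
    set T' := min (T + ε / 2) t with hT'
    have hTT' : T < T' := lt_min (by linarith) hTlt
    have hT'A : T' ∈ A := by
      refine ⟨⟨hT0.trans hTT'.le, min_le_right _ _⟩, ?_⟩
      intro u hu
      rcases le_or_gt u T with h | h
      · exact hTA.2 u ⟨hu.1, h⟩
      · have hut : u ∈ Set.Icc (0:ℝ) t :=
          ⟨hu.1, hu.2.trans (min_le_right _ _)⟩
        have hdist : dist u T < ε := by
          rw [Real.dist_eq, abs_of_pos (by linarith)]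
          have : u ≤ T + ε / 2 := hu.2.trans (min_le_left _ _)
          linarith
        exact hball ⟨Metric.mem_ball.mpr hdist, hut⟩
    have := le_csSup hbddA hT'A
    linarith
  -- conclusion
  intro s hs
  have h1 : ‖g s - z‖ ≤ R := hTA.2 s (hTeq ▸ hs)
  exact ⟨h1, hkey s hs h1⟩
end

section
/- Let t > 0, C > 0, M ≥ 0, and let ξ : [0, t] → ℂ satisfy |ξ(s)| ≤ M for all s ∈ [0, t]. Suppose that for each z ∈ ℂ with |z| > M there is a differentiable function G(·, z) : [0, t] → ℂ with G(0, z) = z such that, for every s ∈ [0, t] with G(s, z) ≠ ξ(s), |∂_s G(s, z)| ≤ C / |G(s, z) − ξ(s)|. Then G(t, z) − z → 0 as |z| → ∞; that is, for every ε > 0 there is ρ > M such that |G(t, z) − z| < ε whenever |z| ≥ ρ. (The hydrodynamic normalization at infinity of the Komatu–Loewner flow, the core of Theorem 5.8(i).) -/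
open Filter Topology

/-- The hydrodynamic normalization at infinity of the Komatu–Loewner flow, the core
of Theorem 5.8(i): under the Poisson-kernel bound on the time derivative, the flow
satisfies `G(t, z) − z → 0` as `|z| → ∞`. -/
theorem hydrodynamic_normalization_of_flow
    (t : ℝ) (ht : 0 < t) (C M : ℝ) (hC : 0 < C) (hM : 0 ≤ M)
    (ξ : ℝ → ℂ) (hξ : ∀ s ∈ Set.Icc 0 t, ‖ξ s‖ ≤ M)
    (G G' : ℝ → ℂ → ℂ)
    (hG0 : ∀ z : ℂ, M < ‖z‖ → G 0 z = z)
    (hGderiv : ∀ z : ℂ, M < ‖z‖ → ∀ s ∈ Set.Icc 0 t,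
      HasDerivWithinAt (fun u => G u z) (G' s z) (Set.Icc 0 t) s)
    (hGbound : ∀ z : ℂ, M < ‖z‖ → ∀ s ∈ Set.Icc 0 t, G s z ≠ ξ s →
      ‖G' s z‖ ≤ C / ‖G s z - ξ s‖) :
    ∀ ε > 0, ∃ ρ : ℝ, M < ρ ∧ ∀ z : ℂ, ρ ≤ ‖z‖ →
      ‖G t z - z‖ < ε := by
  intro ε hε
  set r : ℝ := ε / 2 with hr_def
  have hr : 0 < r := by positivity
  have hpos : 0 < r + 2 * C * t / r + 1 := by positivity
  refine ⟨M + r + 2 * C * t / r + 1, by linarith, ?_⟩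
  intro z hz
  have hzM : M < ‖z‖ := by
    linarith
  set D : ℝ := ‖z‖ - M - r with hD_def
  have hD1 : 2 * C * t / r + 1 ≤ D := by simp only [hD_def]; linarith
  have hD : 0 < D := lt_of_lt_of_le (by positivity) hD1
  set K : ℝ := 2 * C / D with hK_def
  have hK : 0 < K := by positivity
  have hKt : K * t < r := by
    rw [hK_def, div_mul_eq_mul_div, div_lt_iff₀ hD]
    have : r * D ≥ r * (2 * C * t / r + 1) := by nlinarith
    have h2 : r * (2 * C * t / r + 1) = 2 * C * t + r := by
      field_simp
    nlinarith
  -- main estimate via the fencing theorem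
  have key : ∀ x ∈ Set.Icc 0 t, ‖G x z - z‖ ≤ K * x := by
    have hf : ContinuousOn (fun u => G u z - z) (Set.Icc 0 t) := fun u hu =>
      ((hGderiv z hzM u hu).continuousWithinAt).sub continuousWithinAt_const
    have hf' : ∀ x ∈ Set.Ico 0 t,
        HasDerivWithinAt (fun u => G u z - z) (G' x z) (Set.Ici x) x := by
      intro x hx
      have h1 : HasDerivWithinAt (fun u => G u z - z) (G' x z) (Set.Icc 0 t) x :=
        (hGderiv z hzM x (Set.mem_Icc.2 ⟨hx.1, hx.2.le⟩)).sub_const z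
      exact h1.mono_of_mem_nhdsWithin (Icc_mem_nhdsGE_of_mem hx)
    have hB : ∀ x : ℝ, HasDerivAt (fun y => K * y) K x := by
      intro x
      simpa using (hasDerivAt_id x).const_mul K
    have ha : ‖G 0 z - z‖ ≤ K * 0 := by
      rw [hG0 z hzM]; simp
    refine fun x hx =>
      image_norm_le_of_norm_deriv_right_lt_deriv_boundary hf hf' ha hB ?_ hx
    intro x hx heq
    have hxIcc : x ∈ Set.Icc 0 t := ⟨hx.1, hx.2.le⟩
    have hKx : K * x ≤ K * t := by nlinarith [hx.2.le]
    have hGz : ‖G x z - z‖ ≤ K * t := by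
      rw [heq]; exact hKx
    have hGξ : D < ‖G x z - ξ x‖ := by
      have h1 : ‖z‖ - ‖ξ x‖ - ‖G x z - z‖
          ≤ ‖G x z - ξ x‖ := by
        have h1 : ‖z‖ - ‖ξ x‖ ≤ ‖z - ξ x‖ := by
          simpa using norm_sub_norm_le z (ξ x)
        have h2 : ‖z - ξ x‖ - ‖G x z - z‖
            ≤ ‖G x z - ξ x‖ := by
          have h := norm_sub_norm_le (z - ξ x) (z - G x z)
          have h3 : (z - ξ x) - (z - G x z) = G x z - ξ x := by ring
          rw [h3] at h
          have h4 : ‖z - G x z‖ = ‖G x z - z‖ := norm_sub_rev _ _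
          rw [h4] at h
          simpa using h
        linarith
      have hξx := hξ x hxIcc
      have : ‖z‖ - M - K * t ≤ ‖G x z - ξ x‖ := by linarith
      have : ‖z‖ - M - r < ‖G x z - ξ x‖ := by linarith
      simpa [hD_def] using this
    have hne : G x z ≠ ξ x := by
      intro h
      rw [h] at hGξ
      simp at hGξ
      linarith
    have hbd := hGbound z hzM x hxIcc hne
    have h4 : C / ‖G x z - ξ x‖ ≤ C / D := by
      gcongr
    have h5 : C / D < K := by
      rw [hK_def]
      have : 0 < C / D := by positivity
      rw [show (2:ℝ) * C / D = 2 * (C / D) by ring]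
      linarith
    calc ‖G' x z‖ = ‖G' x z‖ := rfl
      _ ≤ C / ‖G x z - ξ x‖ := hbd
      _ ≤ C / D := h4
      _ < K := h5
  have := key t (Set.mem_Icc.2 ⟨ht.le, le_rfl⟩)
  calc ‖G t z - z‖ = ‖G t z - z‖ := rfl
    _ ≤ K * t := this
    _ < r := hKt
    _ < ε := by rw [hr_def]; linarith
end

section
/- Let ξ ∈ ℂ, let f be holomorphic on an open neighborhood of ξ, and suppose f'(ξ) ≠ 0. Then the limit, as z → ξ with z ≠ ξ, of −2·f'(ξ)²·f'(z)/(f(z) − f(ξ))² + 2·f'(z)/(z − ξ)² − 2·f''(z)/(z − ξ) exists and equals f''(ξ)²/(2·f'(ξ)) − (4/3)·f'''(ξ). (The limit of the quantity II(z, t) computed in Remark 6.13, following Lawler–Schramm–Werner's restriction-property computation.) -/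
open Filter Topology

private lemma analyticAt_deriv' {g : ℂ → ℂ} {ξ : ℂ} (hg : AnalyticAt ℂ g ξ) :
    AnalyticAt ℂ (deriv g) ξ :=
  (AnalyticOnNhd.deriv (fun _ hz => hz : AnalyticOnNhd ℂ g {z | AnalyticAt ℂ g z})) ξ hg

private lemma analyticAt_dslope' {g : ℂ → ℂ} {ξ : ℂ} (hg : AnalyticAt ℂ g ξ) :
    AnalyticAt ℂ (dslope g ξ) ξ := by
  obtain ⟨p, hp⟩ := hg
  exact ⟨_, hp.has_fpower_series_dslope_fslope⟩

private lemma deriv_eventually_eq' {g h : ℂ → ℂ} {ξ k : ℂ} (hg : AnalyticAt ℂ g ξ)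
    (hh : ∀ᶠ z in 𝓝 ξ, h z = k + (z - ξ) * g z) :
    ∀ᶠ z in 𝓝 ξ, deriv h z = g z + (z - ξ) * deriv g z := by
  filter_upwards [hg.eventually_analyticAt, hh.eventually_nhds] with z hz hhz
  have h1 : HasDerivAt (fun w => k + (w - ξ) * g w)
      (1 * g z + (z - ξ) * deriv g z) z :=
    (((hasDerivAt_id z).sub_const ξ).mul hz.differentiableAt.hasDerivAt).const_add k
  rw [Filter.EventuallyEq.deriv_eq hhz, h1.deriv]
  ring

private lemma deriv2_at' {g h : ℂ → ℂ} {ξ k : ℂ} (hg : AnalyticAt ℂ g ξ)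
    (hh : ∀ᶠ z in 𝓝 ξ, h z = k + (z - ξ) * g z) :
    deriv (deriv h) ξ = 2 * deriv g ξ := by
  have h1 := deriv_eventually_eq' hg hh
  have hg' : AnalyticAt ℂ (deriv g) ξ := analyticAt_deriv' hg
  have h2 : HasDerivAt (fun z => g z + (z - ξ) * deriv g z)
      (deriv g ξ + (1 * deriv g ξ + (ξ - ξ) * deriv (deriv g) ξ)) ξ :=
    hg.differentiableAt.hasDerivAt.add
      (((hasDerivAt_id ξ).sub_const ξ).mul hg'.differentiableAt.hasDerivAt)
  rw [Filter.EventuallyEq.deriv_eq h1, h2.deriv]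
  ring

private lemma deriv3_at' {g h : ℂ → ℂ} {ξ k : ℂ} (hg : AnalyticAt ℂ g ξ)
    (hh : ∀ᶠ z in 𝓝 ξ, h z = k + (z - ξ) * g z) :
    deriv (deriv (deriv h)) ξ = 3 * deriv (deriv g) ξ := by
  have h1 := deriv_eventually_eq' hg hh
  have hg' : AnalyticAt ℂ (deriv g) ξ := analyticAt_deriv' hg
  have hg'' : AnalyticAt ℂ (deriv (deriv g)) ξ := analyticAt_deriv' hg'
  have h2 : ∀ᶠ z in 𝓝 ξ, deriv (deriv h) z
      = 2 * deriv g z + (z - ξ) * deriv (deriv g) z := by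
    filter_upwards [hg.eventually_analyticAt, hg'.eventually_analyticAt, h1.eventually_nhds]
      with z hz hz' h1z
    have h3 : HasDerivAt (fun w => g w + (w - ξ) * deriv g w)
        (deriv g z + (1 * deriv g z + (z - ξ) * deriv (deriv g) z)) z :=
      hz.differentiableAt.hasDerivAt.add
        (((hasDerivAt_id z).sub_const ξ).mul hz'.differentiableAt.hasDerivAt)
    rw [Filter.EventuallyEq.deriv_eq h1z, h3.deriv]
    ring
  have h4 : HasDerivAt (fun z => 2 * deriv g z + (z - ξ) * deriv (deriv g) z)
      (2 * deriv (deriv g) ξ + (1 * deriv (deriv g) ξ + (ξ - ξ) * deriv (deriv (deriv g)) ξ)) ξ :=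
    (hg'.differentiableAt.hasDerivAt.const_mul 2).add
      (((hasDerivAt_id ξ).sub_const ξ).mul hg''.differentiableAt.hasDerivAt)
  rw [Filter.EventuallyEq.deriv_eq h2, h4.deriv]
  ring

/-- The limit of the quantity `II(z, t)` computed in Remark 6.13, following
Lawler–Schramm–Werner's restriction-property computation: for `f` holomorphic
near `ξ` with `f'(ξ) ≠ 0`,
`−2 f'(ξ)² f'(z)/(f(z) − f(ξ))² + 2 f'(z)/(z − ξ)² − 2 f''(z)/(z − ξ)`
tends to `f''(ξ)²/(2 f'(ξ)) − (4/3) f'''(ξ)` as `z → ξ`, `z ≠ ξ`. -/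
theorem restriction_property_limit
    (ξ : ℂ) (U : Set ℂ) (hU : IsOpen U) (hξU : ξ ∈ U)
    (f : ℂ → ℂ) (hf : DifferentiableOn ℂ f U) (hf' : deriv f ξ ≠ 0) :
    Tendsto
      (fun z : ℂ =>
        -2 * (deriv f ξ) ^ 2 * deriv f z / (f z - f ξ) ^ 2
          + 2 * deriv f z / (z - ξ) ^ 2 - 2 * deriv (deriv f) z / (z - ξ))
      (𝓝[≠] ξ)
      (𝓝 ((deriv (deriv f) ξ) ^ 2 / (2 * deriv f ξ)
        - (4 / 3) * deriv (deriv (deriv f)) ξ)) := by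
  have hfa : AnalyticOnNhd ℂ f U := hf.analyticOnNhd hU
  have hf0 : AnalyticAt ℂ f ξ := hfa ξ hξU
  set g : ℂ → ℂ := dslope f ξ with hgdef
  have hg : AnalyticAt ℂ g ξ := analyticAt_dslope' hf0
  set g₁ : ℂ → ℂ := dslope g ξ with hg1def
  have hg₁ : AnalyticAt ℂ g₁ ξ := analyticAt_dslope' hg
  have hdf : AnalyticAt ℂ (deriv f) ξ := analyticAt_deriv' hf0
  have hddf : AnalyticAt ℂ (deriv (deriv f)) ξ := analyticAt_deriv' hdf
  set a := deriv f ξ with ha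
  set b := deriv g ξ with hb
  set c := deriv g₁ ξ with hc
  have hgξ : g ξ = a := dslope_same f ξ
  have hg₁ξ : g₁ ξ = b := dslope_same g ξ
  -- global identities
  have hfid : ∀ z, f z = f ξ + (z - ξ) * g z := by
    intro z
    have h := sub_smul_dslope f ξ z
    rw [smul_eq_mul] at h
    linear_combination -h
  have hgid : ∀ z, g z = a + (z - ξ) * g₁ z := by
    intro z
    have h := sub_smul_dslope g ξ z
    rw [smul_eq_mul] at h
    rw [← hgξ]
    linear_combination -h
  -- derivative relations at ξ
  have hf2 : deriv (deriv f) ξ = 2 * b :=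
    deriv2_at' hg (Eventually.of_forall hfid)
  have hg2 : deriv (deriv g) ξ = 2 * c :=
    deriv2_at' hg₁ (Eventually.of_forall hgid)
  have hf3 : deriv (deriv (deriv f)) ξ = 6 * c := by
    rw [deriv3_at' hg (Eventually.of_forall hfid), hg2]; ring
  -- the auxiliary function P
  set P : ℂ → ℂ := fun z =>
    deriv f z * g₁ z * (g z + a) - deriv (deriv f) z * (g z) ^ 2 with hPdef
  have hPξ : P ξ = 0 := by
    simp only [hPdef, hgξ, hg₁ξ, ← ha, hf2]; ring
  have hPanal : AnalyticAt ℂ P ξ :=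
    ((hdf.mul hg₁).mul (hg.add analyticAt_const)).sub (hddf.mul (hg.pow 2))
  -- eventual equality of the expression with 2 * dslope P ξ z / (g z)^2
  have hgne : ∀ᶠ z in 𝓝 ξ, g z ≠ 0 :=
    hg.continuousAt.eventually_ne (by rw [hgξ]; exact hf')
  have key : ∀ᶠ z in 𝓝[≠] ξ,
      -2 * a ^ 2 * deriv f z / (f z - f ξ) ^ 2
        + 2 * deriv f z / (z - ξ) ^ 2 - 2 * deriv (deriv f) z / (z - ξ)
      = 2 * dslope P ξ z / (g z) ^ 2 := by
    filter_upwards [self_mem_nhdsWithin, eventually_nhdsWithin_of_eventually_nhds hgne]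
      with z hzne hgz
    have hzξ : z ≠ ξ := hzne
    have hw : z - ξ ≠ 0 := sub_ne_zero.mpr hzξ
    have hfz : f z - f ξ = (z - ξ) * g z := by linear_combination hfid z
    have hdsl : dslope P ξ z = P z / (z - ξ) := by
      rw [dslope_of_ne _ hzξ, slope_def_field, hPξ, sub_zero]
    rw [hfz, hdsl]
    simp only [hPdef]
    have hgz1 : g z = a + (z - ξ) * g₁ z := hgid z
    rw [hgz1] at hgz ⊢
    field_simp
    ring
  -- the limit of the right-hand side
  have hPdiff : DifferentiableAt ℂ P ξ := hPanal.differentiableAt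
  have hcont : ContinuousAt (fun z => 2 * dslope P ξ z / (g z) ^ 2) ξ := by
    exact (continuousAt_const.mul (continuousAt_dslope_same.mpr hPdiff)).div
      (hg.continuousAt.pow 2) (by simp [hgξ, pow_ne_zero, hf'])
  have htend : Tendsto (fun z => 2 * dslope P ξ z / (g z) ^ 2) (𝓝[≠] ξ)
      (𝓝 (2 * dslope P ξ ξ / (g ξ) ^ 2)) :=
    hcont.continuousWithinAt.tendsto
  -- compute the limit value
  have hP1 : HasDerivAt (deriv f) (2 * b) ξ := hf2 ▸ hdf.differentiableAt.hasDerivAt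
  have hP2 : HasDerivAt g₁ c ξ := hg₁.differentiableAt.hasDerivAt
  have hP3 : HasDerivAt g b ξ := hg.differentiableAt.hasDerivAt
  have hP4 : HasDerivAt (deriv (deriv f)) (6 * c) ξ := hf3 ▸ hddf.differentiableAt.hasDerivAt
  have hPder := (((hP1.mul hP2).mul (hP3.add_const a)).sub (hP4.mul (hP3.pow 2)))
  have hval : dslope P ξ ξ = a * b ^ 2 - 4 * a ^ 2 * c := by
    rw [dslope_same, hPdef]
    rw [(show HasDerivAt (fun z => deriv f z * g₁ z * (g z + a) - deriv (deriv f) z * g z ^ 2) _ ξ from hPder).deriv]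
    simp only [Pi.mul_apply, Pi.pow_apply]
    rw [hgξ, hg₁ξ, ← ha, hf2]
    push_cast
    ring
  have hfinal : 2 * dslope P ξ ξ / (g ξ) ^ 2
      = (deriv (deriv f) ξ) ^ 2 / (2 * deriv f ξ) - (4 / 3) * deriv (deriv (deriv f)) ξ := by
    rw [hval, hgξ, hf2, hf3, ← ha]
    field_simp
    ring
  rw [← hfinal]
  exact Filter.Tendsto.congr' (Filter.EventuallyEq.symm key) htend
end
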